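/- Let d ≥ 2 and s = (d − 1/2)/(d − 1). Define c_d(u) = (d!/d^d) ∏_{j=1}^d u_j^{−(1−1/d)} · 1{∑_{j=1}^d u_j^{1/d} > d−1} on [0,1]^d. Then ∫_{[0,1]^d} c_d(u)^s du ≤ 2^d. -/

import Mathlib

open MeasureTheory
open Set
open scoped ENNReal

namespace CdAux

noncomputable def g (n : ℕ) (a : ℝ) : ℝ := if 0 < a then a ^ n else 0

lemma g_nonneg (n : ℕ) (a : ℝ) : 0 ≤ g n a := by
  unfold g; split <;> positivity

lemma g_mono (n : ℕ) : Monotone (g n) := by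
  intro v w hvw
  by_cases hv : 0 < v
  · rw [g, g, if_pos hv, if_pos (lt_of_lt_of_le hv hvw)]
    exact pow_le_pow_left₀ hv.le hvw n
  · rw [g, if_neg hv]; exact g_nonneg n w

@[fun_prop]
lemma g_measurable (n : ℕ) : Measurable (g n) := by
  unfold g
  exact Measurable.ite (measurableSet_lt measurable_const measurable_id) (by fun_prop) measurable_const

lemma oneDim (β : ℝ) (hβ : 0 < β) (n : ℕ) (a : ℝ) (ha : a ≤ 1) :
    ∫⁻ x in Icc (0:ℝ) 1, ENNReal.ofReal (x ^ (β-1) * g n (a - 1 + x ^ (2*β)))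
      ≤ ENNReal.ofReal (g (n+1) a / (β * (n+1))) := by
  by_cases ha0 : 0 < a
  swap
  · -- integrand vanishes on the set
    have hz : ∫⁻ x in Icc (0:ℝ) 1, ENNReal.ofReal (x ^ (β-1) * g n (a - 1 + x ^ (2*β)))
        = ∫⁻ _x in Icc (0:ℝ) 1, (0:ℝ≥0∞) := by
      apply setLIntegral_congr_fun measurableSet_Icc
      intro x hx
      beta_reduce
      have hx1 : x ^ (2*β) ≤ 1 := Real.rpow_le_one hx.1 hx.2 (by positivity)
      have : a - 1 + x ^ (2*β) ≤ 0 := by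
        push_neg at ha0; linarith
      rw [g, if_neg (by linarith), mul_zero, ENNReal.ofReal_zero]
    rw [hz, lintegral_zero]
    exact zero_le
  -- main case 0 < a ≤ 1
  have hmono : ∫⁻ x in Icc (0:ℝ) 1, ENNReal.ofReal (x ^ (β-1) * g n (a - 1 + x ^ (2*β)))
      ≤ ∫⁻ x in Icc (0:ℝ) 1, ENNReal.ofReal (x ^ (β-1) * g n (a - 1 + x ^ β)) := by
    apply setLIntegral_mono (by fun_prop) -- measurability of the RHS integrand
    intro x hx
    apply ENNReal.ofReal_le_ofReal
    apply mul_le_mul_of_nonneg_left _ (Real.rpow_nonneg hx.1 _)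
    apply g_mono
    have : x ^ (2*β) ≤ x ^ β := by
      rcases eq_or_lt_of_le hx.1 with h0 | h0
      · rw [← h0, Real.zero_rpow (by positivity), Real.zero_rpow hβ.ne']
      · exact Real.rpow_le_rpow_of_exponent_ge h0 hx.2 (by linarith)
    linarith
  refine le_trans hmono ?_
  rw [g, if_pos ha0]
  set c : ℝ := (1-a) ^ (β⁻¹) with hc
  have h1a : (0:ℝ) ≤ 1 - a := by linarith
  have hc0 : 0 ≤ c := Real.rpow_nonneg h1a _
  have hc1 : c < 1 := Real.rpow_lt_one h1a (by linarith) (by positivity)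
  have hcβ : c ^ β = 1 - a := by
    rw [hc, ← Real.rpow_mul h1a, inv_mul_cancel₀ hβ.ne', Real.rpow_one]
  have step1 : ∫⁻ x in Icc (0:ℝ) 1, ENNReal.ofReal (x ^ (β-1) * g n (a - 1 + x ^ β))
      = ∫⁻ x in Ioc (0:ℝ) 1, ENNReal.ofReal (x ^ (β-1) * g n (a - 1 + x ^ β)) :=
    (setLIntegral_congr Ioc_ae_eq_Icc).symm
  rw [step1, ← Ioc_union_Ioc_eq_Ioc hc0 hc1.le]
  refine le_trans (lintegral_union_le _ _ _) ?_
  have first0 : ∫⁻ x in Ioc (0:ℝ) c, ENNReal.ofReal (x ^ (β-1) * g n (a - 1 + x ^ β))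
      = ∫⁻ _x in Ioc (0:ℝ) c, (0:ℝ≥0∞) := by
    apply setLIntegral_congr_fun measurableSet_Ioc
    intro x hx
    beta_reduce
    have : x ^ β ≤ 1 - a := hcβ ▸ Real.rpow_le_rpow hx.1.le hx.2 hβ.le
    rw [g, if_neg (by linarith), mul_zero, ENNReal.ofReal_zero]
  rw [first0, lintegral_zero, zero_add]
  have second : ∫⁻ x in Ioc c 1, ENNReal.ofReal (x ^ (β-1) * g n (a - 1 + x ^ β))
      = ∫⁻ x in Ioc c 1, ENNReal.ofReal (x ^ (β-1) * (a - 1 + x ^ β) ^ n) := by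
    apply setLIntegral_congr_fun measurableSet_Ioc
    intro x hx
    beta_reduce
    have : 1 - a < x ^ β := hcβ ▸ Real.rpow_lt_rpow hc0 hx.1 hβ
    rw [g, if_pos (by linarith)]
  rw [second]
  by_cases hac : a < 1
  · -- c > 0, FTC on [c,1]
    have hcpos : 0 < c := Real.rpow_pos_of_pos (by linarith) _
    set h₀ : ℝ → ℝ := fun x => x ^ (β-1) * (a - 1 + x ^ β) ^ n with hh₀
    set Φ : ℝ → ℝ := fun x => (a - 1 + x ^ β) ^ (n+1) / (β * (n+1)) with hΦ
    have huIcc : uIcc c 1 = Icc c 1 := uIcc_of_le hc1.le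
    have hcont : ContinuousOn h₀ (uIcc c 1) := by
      rw [huIcc]
      apply ContinuousOn.mul
      · exact continuousOn_id.rpow_const (fun x hx => Or.inl (ne_of_gt (lt_of_lt_of_le hcpos hx.1)))
      · exact ((continuousOn_const.add (continuousOn_id.rpow_const
          (fun x hx => Or.inl (ne_of_gt (lt_of_lt_of_le hcpos hx.1))))).pow n)
    have hint : IntervalIntegrable h₀ volume c 1 := hcont.intervalIntegrable
    have hderiv : ∀ x ∈ uIcc c 1, HasDerivAt Φ (h₀ x) x := by
      intro x hx
      rw [huIcc] at hx
      have hxpos : 0 < x := lt_of_lt_of_le hcpos hx.1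
      have h1 : HasDerivAt (fun y : ℝ => a - 1 + y ^ β) (β * x ^ (β-1)) x :=
        (Real.hasDerivAt_rpow_const (Or.inl hxpos.ne')).const_add _
      have h3 : HasDerivAt Φ (((n+1:ℕ):ℝ) * (a - 1 + x ^ β) ^ (n + 1 - 1) * (β * x ^ (β - 1)) / (β * (n + 1))) x :=
        (h1.pow (n+1)).div_const (β * (n+1))
      convert h3 using 1
      rw [hh₀]
      simp only [Nat.add_sub_cancel]
      push_cast
      field_simp
    have hFTC : ∫ x in c..1, h₀ x = Φ 1 - Φ c :=
      intervalIntegral.integral_eq_sub_of_hasDerivAt hderiv hint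
    have hΦ1 : Φ 1 = a ^ (n+1) / (β * (n+1)) := by
      simp only [hΦ]; rw [Real.one_rpow]; norm_num
    have hΦc : Φ c = 0 := by
      simp only [hΦ]; rw [hcβ]; norm_num
    have hval : ∫ x in Ioc c 1, h₀ x = a ^ (n+1) / (β * (n+1)) := by
      rw [← intervalIntegral.integral_of_le hc1.le, hFTC, hΦ1, hΦc, sub_zero]
    have hInt : IntegrableOn h₀ (Ioc c 1) :=
      (intervalIntegrable_iff_integrableOn_Ioc_of_le hc1.le).mp hint
    have hnn : 0 ≤ᶠ[ae (volume.restrict (Ioc c 1))] h₀ := by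
      refine (ae_restrict_iff' measurableSet_Ioc).mpr (Filter.Eventually.of_forall fun x hx => ?_)
      have hxpos : 0 < x := lt_of_lt_of_le hcpos hx.1.le
      have : 1 - a < x ^ β := hcβ ▸ Real.rpow_lt_rpow hc0 hx.1 hβ
      have hb : (0:ℝ) < a - 1 + x ^ β := by linarith
      show (0:ℝ) ≤ h₀ x
      rw [hh₀]
      positivity
    rw [← ofReal_integral_eq_lintegral_ofReal hInt hnn, hval]
  · -- a = 1, c = 0, direct rpow integral
    have ha1 : a = 1 := le_antisymm ha (not_lt.mp hac)
    have hc0' : c = 0 := by rw [hc, ha1]; simp [Real.zero_rpow (inv_ne_zero hβ.ne')]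
    set r : ℝ := β * (n+1) - 1 with hr
    have hrgt : -1 < r := by
      have : 0 < β * (n+1) := by positivity
      rw [hr]; linarith
    have hsame : ∫⁻ x in Ioc c 1, ENNReal.ofReal (x ^ (β-1) * (a - 1 + x ^ β) ^ n)
        = ∫⁻ x in Ioc (0:ℝ) 1, ENNReal.ofReal (x ^ r) := by
      rw [hc0']
      apply setLIntegral_congr_fun measurableSet_Ioc
      intro x hx
      beta_reduce
      rw [ha1]
      have h1 : (1 - 1 + x ^ β) = x ^ β := by ring
      rw [h1, ← Real.rpow_natCast (x ^ β) n, ← Real.rpow_mul hx.1.le,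
        ← Real.rpow_add hx.1, hr]
      ring_nf
    rw [hsame]
    have hInt : IntegrableOn (fun x : ℝ => x ^ r) (Ioc (0:ℝ) 1) :=
      (intervalIntegrable_iff_integrableOn_Ioc_of_le zero_le_one).mp
        (intervalIntegral.intervalIntegrable_rpow' hrgt)
    have hnn : 0 ≤ᶠ[ae (volume.restrict (Ioc (0:ℝ) 1))] (fun x : ℝ => x ^ r) := by
      refine (ae_restrict_iff' measurableSet_Ioc).mpr (Filter.Eventually.of_forall fun x hx => ?_)
      exact Real.rpow_nonneg hx.1.le r
    rw [← ofReal_integral_eq_lintegral_ofReal hInt hnn]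
    have hval : ∫ x in Ioc (0:ℝ) 1, x ^ r = 1 / (β * (n+1)) := by
      rw [← intervalIntegral.integral_of_le zero_le_one, integral_rpow (Or.inl hrgt)]
      rw [Real.one_rpow, Real.zero_rpow (by rw [hr]; push_cast; nlinarith [mul_pos hβ (by positivity : (0:ℝ) < (n:ℝ)+1)] : r + 1 ≠ 0)]
      rw [hr]; ring_nf
    rw [hval, ha1, one_pow]

lemma key (β : ℝ) (hβ : 0 < β) : ∀ (n : ℕ) (a : ℝ), a ≤ 1 →
    ∫⁻ u in Set.univ.pi fun _ : Fin n => Icc (0:ℝ) 1,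
      ENNReal.ofReal (if (n:ℝ) - a < ∑ j, (u j) ^ (2*β) then ∏ j, (u j) ^ (β - 1) else 0)
    ≤ ENNReal.ofReal ((β⁻¹)^n / n.factorial * g n a) := by
  intro n
  induction n with
  | zero =>
    intro a _
    have hset : (Set.univ.pi fun _ : Fin 0 => Icc (0:ℝ) 1) = Set.univ := by
      ext x; simp
    rw [hset]
    simp only [Finset.univ_eq_empty, Finset.sum_empty, Finset.prod_empty,
      Nat.cast_zero, zero_sub, neg_lt, neg_zero]
    rw [Measure.restrict_univ, lintegral_const]
    have h1 : (volume : Measure (Fin 0 → ℝ)) Set.univ = 1 := by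
      rw [volume_pi, Measure.pi_univ]; simp
    rw [h1, mul_one]
    apply ENNReal.ofReal_le_ofReal
    simp only [g, pow_zero, Nat.factorial_zero]
    split <;> rename_i h
    · rw [if_pos (by linarith)]; norm_num
    · split <;> norm_num
  | succ n IH =>
    intro a ha
    have hSmeas : MeasurableSet (Set.univ.pi fun _ : Fin (n+1) => Icc (0:ℝ) 1) :=
      MeasurableSet.univ_pi fun _ => measurableSet_Icc
    have hSmeasN : MeasurableSet (Set.univ.pi fun _ : Fin n => Icc (0:ℝ) 1) :=
      MeasurableSet.univ_pi fun _ => measurableSet_Icc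
    set G : (Fin (n+1) → ℝ) → ℝ≥0∞ := fun u =>
      ENNReal.ofReal (if ((n+1:ℕ):ℝ) - a < ∑ j, (u j) ^ (2*β) then ∏ j, (u j) ^ (β - 1) else 0)
      with hG
    have hGm : Measurable G := by
      apply Measurable.ennreal_ofReal
      exact Measurable.ite (measurableSet_lt measurable_const (by fun_prop)) (by fun_prop)
        measurable_const
    have hH : Measurable ((Set.univ.pi fun _ : Fin (n+1) => Icc (0:ℝ) 1).indicator G) :=
      hGm.indicator hSmeas
    have hcons : Measurable fun z : ℝ × (Fin n → ℝ) => (Fin.cons z.1 z.2 : Fin (n+1) → ℝ) := by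
      refine measurable_pi_iff.mpr fun j => ?_
      refine Fin.cases ?_ ?_ j
      · simpa [Fin.cons_zero] using measurable_fst
      · intro i
        simpa [Fin.cons_succ, Function.comp_def] using (measurable_pi_apply i).comp measurable_snd
    have mp : MeasurePreserving
        (MeasurableEquiv.piFinSuccAbove (fun _ : Fin (n+1) => ℝ) 0).symm
        ((volume : Measure ℝ).prod (Measure.pi fun _ : Fin n => (volume : Measure ℝ)))
        (Measure.pi fun _ : Fin (n+1) => (volume : Measure ℝ)) :=
      (measurePreserving_piFinSuccAbove (fun _ : Fin (n+1) => (volume : Measure ℝ)) 0).symm _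
    calc ∫⁻ u in Set.univ.pi fun _ : Fin (n+1) => Icc (0:ℝ) 1,
          ENNReal.ofReal (if ((n+1:ℕ):ℝ) - a < ∑ j, (u j) ^ (2*β) then ∏ j, (u j) ^ (β - 1) else 0)
        = ∫⁻ u, (Set.univ.pi fun _ : Fin (n+1) => Icc (0:ℝ) 1).indicator G u ∂(Measure.pi fun _ => volume) := by
          rw [← volume_pi, lintegral_indicator hSmeas]
      _ = ∫⁻ z : ℝ × (Fin n → ℝ), (Set.univ.pi fun _ : Fin (n+1) => Icc (0:ℝ) 1).indicator G
            ((MeasurableEquiv.piFinSuccAbove (fun _ : Fin (n+1) => ℝ) 0).symm z)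
            ∂((volume : Measure ℝ).prod (Measure.pi fun _ => (volume : Measure ℝ))) := by
          rw [mp.lintegral_comp hH]
      _ = ∫⁻ x : ℝ, ∫⁻ y : Fin n → ℝ, (Set.univ.pi fun _ : Fin (n+1) => Icc (0:ℝ) 1).indicator G
            ((Fin.cons x y : Fin (n+1) → ℝ)) ∂(Measure.pi fun _ => (volume : Measure ℝ)) ∂(volume : Measure ℝ) := by
          simp_rw [MeasurableEquiv.piFinSuccAbove_symm_apply, Fin.insertNthEquiv_zero]
          have hce : ∀ z : ℝ × (Fin n → ℝ),
              (Fin.consEquiv fun _ : Fin (n+1) => ℝ) z = (Fin.cons z.1 z.2 : Fin (n+1) → ℝ) :=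
            fun z => rfl
          simp_rw [hce]
          rw [lintegral_prod (fun z : ℝ × (Fin n → ℝ) =>
            (Set.univ.pi fun _ : Fin (n+1) => Icc (0:ℝ) 1).indicator G
              (Fin.cons z.1 z.2 : Fin (n+1) → ℝ)) ((hH.comp hcons).aemeasurable)]
      _ ≤ ENNReal.ofReal ((β⁻¹)^(n+1) / (n+1).factorial * g (n+1) a) := by
          set G' : ℝ → (Fin n → ℝ) → ℝ≥0∞ := fun x y =>
            ENNReal.ofReal (if (n:ℝ) - (a - 1 + x ^ (2*β)) < ∑ j, (y j) ^ (2*β)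
              then ∏ j, (y j) ^ (β - 1) else 0) with hG'
          have hmem : ∀ (x : ℝ) (y : Fin n → ℝ),
              ((Fin.cons x y : Fin (n+1) → ℝ) ∈ Set.univ.pi fun _ : Fin (n+1) => Icc (0:ℝ) 1)
              ↔ (x ∈ Icc (0:ℝ) 1 ∧ y ∈ Set.univ.pi fun _ : Fin n => Icc (0:ℝ) 1) := by
            intro x y
            simp only [Set.mem_univ_pi, Fin.forall_fin_succ, Fin.cons_zero, Fin.cons_succ]
          have hsplit : ∀ (x : ℝ) (y : Fin n → ℝ),
              (Set.univ.pi fun _ : Fin (n+1) => Icc (0:ℝ) 1).indicator G (Fin.cons x y : Fin (n+1) → ℝ)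
              = (Icc (0:ℝ) 1).indicator (fun t => ENNReal.ofReal (t ^ (β-1))) x
                * (Set.univ.pi fun _ : Fin n => Icc (0:ℝ) 1).indicator (G' x) y := by
            intro x y
            by_cases hx : x ∈ Icc (0:ℝ) 1
            · by_cases hy : y ∈ Set.univ.pi fun _ : Fin n => Icc (0:ℝ) 1
              · rw [Set.indicator_of_mem ((hmem x y).mpr ⟨hx, hy⟩), Set.indicator_of_mem hx,
                  Set.indicator_of_mem hy, hG, hG']
                simp only [Fin.sum_univ_succ, Fin.prod_univ_succ, Fin.cons_zero, Fin.cons_succ]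
                have hcond : (((n+1:ℕ):ℝ) - a < x ^ (2*β) + ∑ j : Fin n, (y j) ^ (2*β))
                    ↔ ((n:ℝ) - (a - 1 + x ^ (2*β)) < ∑ j : Fin n, (y j) ^ (2*β)) := by
                  push_cast; constructor <;> intro <;> linarith
                by_cases hcc : (n:ℝ) - (a - 1 + x ^ (2*β)) < ∑ j : Fin n, (y j) ^ (2*β)
                · rw [if_pos (hcond.mpr hcc), if_pos hcc,
                    ENNReal.ofReal_mul (Real.rpow_nonneg hx.1 _)]
                · rw [if_neg (fun hcon => hcc (hcond.mp hcon)), if_neg hcc,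
                    ENNReal.ofReal_zero, mul_zero]
              · rw [Set.indicator_of_notMem hy, Set.indicator_of_notMem
                  (fun hco => hy ((hmem x y).mp hco).2), mul_zero]
            · rw [Set.indicator_of_notMem (fun hco => hx ((hmem x y).mp hco).1),
                Set.indicator_of_notMem hx, zero_mul]
          simp_rw [hsplit]
          have hne : ∀ x : ℝ, (Icc (0:ℝ) 1).indicator (fun t => ENNReal.ofReal (t ^ (β-1))) x ≠ ⊤ := by
            intro x
            by_cases hx : x ∈ Icc (0:ℝ) 1
            · rw [Set.indicator_of_mem hx]; exact ENNReal.ofReal_ne_top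
            · rw [Set.indicator_of_notMem hx]; exact ENNReal.zero_ne_top
          have hpull : ∀ x : ℝ,
              (∫⁻ y, (Icc (0:ℝ) 1).indicator (fun t => ENNReal.ofReal (t ^ (β-1))) x
                * (Set.univ.pi fun _ : Fin n => Icc (0:ℝ) 1).indicator (G' x) y
                ∂(Measure.pi fun _ => (volume : Measure ℝ)))
              = (Icc (0:ℝ) 1).indicator (fun t => ENNReal.ofReal (t ^ (β-1))) x
                * ∫⁻ y in Set.univ.pi fun _ : Fin n => Icc (0:ℝ) 1, G' x y
                  ∂(Measure.pi fun _ => (volume : Measure ℝ)) := by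
            intro x
            rw [lintegral_const_mul' _ _ (hne x), lintegral_indicator hSmeasN]
          simp_rw [hpull, ← volume_pi]
          have hindmul : ∀ x : ℝ, (Icc (0:ℝ) 1).indicator (fun t => ENNReal.ofReal (t ^ (β-1))) x
              * (∫⁻ y in Set.univ.pi fun _ : Fin n => Icc (0:ℝ) 1, G' x y)
              = (Icc (0:ℝ) 1).indicator
                  (fun t => ENNReal.ofReal (t ^ (β-1))
                    * ∫⁻ y in Set.univ.pi fun _ : Fin n => Icc (0:ℝ) 1, G' t y) x := by
            intro x
            by_cases hx : x ∈ Icc (0:ℝ) 1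
            · rw [Set.indicator_of_mem hx, Set.indicator_of_mem hx]
            · rw [Set.indicator_of_notMem hx, Set.indicator_of_notMem hx, zero_mul]
          simp_rw [hindmul]
          rw [lintegral_indicator measurableSet_Icc]
          -- bound the inner integral by IH
          have hCn : (0:ℝ) ≤ (β⁻¹)^n / n.factorial := by positivity
          calc ∫⁻ x in Icc (0:ℝ) 1, ENNReal.ofReal (x ^ (β-1))
                  * ∫⁻ y in Set.univ.pi fun _ : Fin n => Icc (0:ℝ) 1, G' x y
              ≤ ∫⁻ x in Icc (0:ℝ) 1, ENNReal.ofReal (x ^ (β-1))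
                  * ENNReal.ofReal ((β⁻¹)^n / n.factorial * g n (a - 1 + x ^ (2*β))) := by
                apply setLIntegral_mono (by fun_prop)
                intro x hx
                apply mul_le_mul_right
                apply IH
                have : x ^ (2*β) ≤ 1 := Real.rpow_le_one hx.1 hx.2 (by positivity)
                linarith
            _ = ENNReal.ofReal ((β⁻¹)^n / n.factorial)
                  * ∫⁻ x in Icc (0:ℝ) 1, ENNReal.ofReal (x ^ (β-1) * g n (a - 1 + x ^ (2*β))) := by
                rw [← lintegral_const_mul' _ _ ENNReal.ofReal_ne_top]
                apply setLIntegral_congr_fun measurableSet_Icc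
                intro x hx
                beta_reduce
                rw [ENNReal.ofReal_mul hCn, mul_left_comm,
                  ← ENNReal.ofReal_mul (Real.rpow_nonneg hx.1 _)]
            _ ≤ ENNReal.ofReal ((β⁻¹)^n / n.factorial)
                  * ENNReal.ofReal (g (n+1) a / (β * (n+1))) :=
                mul_le_mul_right (oneDim β hβ n a ha) _
            _ ≤ ENNReal.ofReal ((β⁻¹)^(n+1) / (n+1).factorial * g (n+1) a) := by
                rw [← ENNReal.ofReal_mul hCn]
                apply ENNReal.ofReal_le_ofReal
                rw [Nat.factorial_succ]
                have hβne : β ≠ 0 := hβ.ne'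
                have hnfac : ((n.factorial : ℝ)) ≠ 0 := by positivity
                have hn1 : ((n:ℝ)+1) ≠ 0 := by positivity
                apply le_of_eq
                push_cast
                rw [pow_succ]
                field_simp

end CdAux

open CdAux in
/-- For `d ≥ 2` and `s = (d − 1/2)/(d − 1)`, the density
`c_d(u) = (d!/d^d) ∏_j u_j^{−(1−1/d)} 1{∑_j u_j^{1/d} > d−1}` on `[0,1]^d`
satisfies `∫ c_d(u)^s du ≤ 2^d`. -/
theorem cd_power_integral_le (d : ℕ) (hd : 2 ≤ d) :
    ∫ u in Set.univ.pi fun _ : Fin d => Set.Icc (0:ℝ) 1,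
        (if (d:ℝ) - 1 < ∑ j, (u j) ^ ((d:ℝ)⁻¹) then
            ((Nat.factorial d : ℝ) / (d:ℝ)^d) * ∏ j, (u j) ^ (-(1 - (d:ℝ)⁻¹))
          else 0) ^ (((d:ℝ) - 1/2) / ((d:ℝ) - 1))
      ≤ 2^d := by
  have hd2 : (2:ℝ) ≤ (d:ℝ) := by exact_mod_cast hd
  have hd0 : (0:ℝ) < (d:ℝ) := by linarith
  set s : ℝ := ((d:ℝ) - 1/2) / ((d:ℝ) - 1) with hs
  set β : ℝ := (2*(d:ℝ))⁻¹ with hβdef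
  have hβ : 0 < β := by rw [hβdef]; positivity
  have hs1 : 1 ≤ s := by
    rw [hs, le_div_iff₀ (by linarith : (0:ℝ) < (d:ℝ) - 1)]
    linarith
  have hsne : s ≠ 0 := by positivity
  set K : ℝ := (Nat.factorial d : ℝ) / (d:ℝ)^d with hK
  have hKpos : 0 < K := by rw [hK]; positivity
  have hK1 : K ≤ 1 := by
    rw [hK, div_le_one (by positivity)]
    exact_mod_cast Nat.factorial_le_pow d
  have hexp : (d:ℝ)⁻¹ = 2*β := by rw [hβdef]; field_simp
  have hexps : (-(1 - 2*β))*s = β - 1 := by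
    rw [hβdef, hs]
    have h1 : (d:ℝ) - 1 ≠ 0 := by linarith
    field_simp
    ring
  have hSmeas : MeasurableSet (Set.univ.pi fun _ : Fin d => Set.Icc (0:ℝ) 1) :=
    MeasurableSet.univ_pi fun _ => measurableSet_Icc
  set f : (Fin d → ℝ) → ℝ := fun u =>
    (if (d:ℝ) - 1 < ∑ j, (u j) ^ ((d:ℝ)⁻¹) then
        K * ∏ j, (u j) ^ (-(1 - (d:ℝ)⁻¹)) else 0) ^ s with hf
  have hfm : Measurable f := by
    have h1 : Measurable fun u : Fin d → ℝ =>
        (if (d:ℝ) - 1 < ∑ j, (u j) ^ ((d:ℝ)⁻¹) then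
          K * ∏ j, (u j) ^ (-(1 - (d:ℝ)⁻¹)) else 0) :=
      Measurable.ite (measurableSet_lt measurable_const (by fun_prop)) (by fun_prop)
        measurable_const
    exact (by fun_prop : Measurable fun x : ℝ => x ^ s).comp h1
  have hnn : 0 ≤ᶠ[ae (volume.restrict (Set.univ.pi fun _ : Fin d => Set.Icc (0:ℝ) 1))] f := by
    refine (ae_restrict_iff' hSmeas).mpr (Filter.Eventually.of_forall fun u hu => ?_)
    apply Real.rpow_nonneg
    split
    · apply mul_nonneg hKpos.le
      exact Finset.prod_nonneg fun j _ => Real.rpow_nonneg (Set.mem_univ_pi.mp hu j).1 _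
    · exact le_rfl
  rw [integral_eq_lintegral_of_nonneg_ae hnn hfm.aestronglyMeasurable]
  apply ENNReal.toReal_le_of_le_ofReal (by positivity)
  have heq : ∀ u ∈ Set.univ.pi fun _ : Fin d => Set.Icc (0:ℝ) 1,
      ENNReal.ofReal (f u) = ENNReal.ofReal (K ^ s)
        * ENNReal.ofReal (if (d:ℝ) - 1 < ∑ j, (u j) ^ (2*β)
            then ∏ j, (u j) ^ (β - 1) else 0) := by
    intro u hu
    have hu' : ∀ j, 0 ≤ u j := fun j => (Set.mem_univ_pi.mp hu j).1
    rw [← ENNReal.ofReal_mul (Real.rpow_nonneg hKpos.le _)]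
    congr 1
    rw [hf]
    simp only [hexp]
    rw [apply_ite (fun t : ℝ => t ^ s), Real.zero_rpow hsne, mul_ite, mul_zero]
    congr 1
    rw [Real.mul_rpow hKpos.le (Finset.prod_nonneg fun j _ => Real.rpow_nonneg (hu' j) _)]
    congr 1
    rw [← Real.finset_prod_rpow _ _ (fun j _ => Real.rpow_nonneg (hu' j) _) s]
    apply Finset.prod_congr rfl
    intro j _
    rw [← Real.rpow_mul (hu' j), hexps]
  calc ∫⁻ u in Set.univ.pi fun _ : Fin d => Set.Icc (0:ℝ) 1, ENNReal.ofReal (f u)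
      = ENNReal.ofReal (K ^ s) * ∫⁻ u in Set.univ.pi fun _ : Fin d => Set.Icc (0:ℝ) 1,
          ENNReal.ofReal (if (d:ℝ) - 1 < ∑ j, (u j) ^ (2*β)
            then ∏ j, (u j) ^ (β - 1) else 0) := by
        rw [← lintegral_const_mul' _ _ ENNReal.ofReal_ne_top]
        exact setLIntegral_congr_fun hSmeas heq
    _ ≤ ENNReal.ofReal (K ^ s) * ENNReal.ofReal ((β⁻¹)^d / d.factorial * g d 1) := by
        apply mul_le_mul_right
        exact key β hβ d 1 le_rfl
    _ ≤ ENNReal.ofReal (2^d) := by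
        rw [← ENNReal.ofReal_mul (Real.rpow_nonneg hKpos.le _)]
        apply ENNReal.ofReal_le_ofReal
        have hg1 : g d 1 = 1 := by rw [g, if_pos one_pos, one_pow]
        have hβinv : β⁻¹ = 2*(d:ℝ) := by rw [hβdef, inv_inv]
        have hKs : K ^ s ≤ K := by
          calc K ^ s ≤ K ^ (1:ℝ) := Real.rpow_le_rpow_of_exponent_ge hKpos hK1 hs1
            _ = K := Real.rpow_one K
        calc K ^ s * ((β⁻¹)^d / d.factorial * g d 1)
            ≤ K * ((β⁻¹)^d / d.factorial * g d 1) := by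
              apply mul_le_mul_of_nonneg_right hKs
              rw [hg1, mul_one]
              positivity
          _ = 2^d := by
              rw [hg1, mul_one, hβinv, hK, mul_pow]
              have h1 : ((d:ℝ))^d ≠ 0 := by positivity
              have h2 : ((Nat.factorial d : ℝ)) ≠ 0 := by positivity
              field_simp
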